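/- Let Y be a random variable with Y ≥ 1 almost surely, and let p ≥ 1. Then (E[(log Y)^{p/2}])^{1/p} ≤ 5^{1/p} (p/(2e))^{1/2} · max(1, √(E[Y])/2). -/

import Mathlib

open MeasureTheory

lemma aux_rpow_le_exp {a t : ℝ} (ha : 0 < a) (ht : 0 ≤ t) :
    t ^ a ≤ (a / Real.exp 1) ^ a * Real.exp t := by
  rcases eq_or_lt_of_le ht with h | h
  · rw [← h, Real.zero_rpow ha.ne']
    positivity
  · have h1 : Real.log (t / a) ≤ t / a - 1 := Real.log_le_sub_one_of_pos (by positivity)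
    rw [Real.log_div h.ne' ha.ne'] at h1
    have hta : a * (t / a) = t := by field_simp
    have h2 : a * Real.log t ≤ a * Real.log a - a + t := by
      nlinarith [mul_le_mul_of_nonneg_left h1 ha.le]
    calc t ^ a = Real.exp (a * Real.log t) := by
          rw [← Real.log_rpow h, Real.exp_log (Real.rpow_pos_of_pos h a)]
      _ ≤ Real.exp (a * Real.log a - a + t) := Real.exp_le_exp.mpr h2
      _ = (a / Real.exp 1) ^ a * Real.exp t := by
          rw [Real.exp_add]
          congr 1
          rw [← Real.exp_log (show (0:ℝ) < (a / Real.exp 1) ^ a by positivity),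
            Real.log_rpow (by positivity), Real.log_div ha.ne' (Real.exp_pos 1).ne',
            Real.log_exp]
          ring_nf

lemma aux_key_pointwise {s p y : ℝ} (hs : 1 ≤ s) (hp : 1 ≤ p) (hy : 1 ≤ y) :
    (Real.log y) ^ (p / 2) ≤ (p * s / (2 * Real.exp 1)) ^ (p / 2) * y ^ (1 / s) := by
  have hs0 : 0 < s := lt_of_lt_of_le one_pos hs
  have hy0 : 0 < y := lt_of_lt_of_le one_pos hy
  have hl : 0 ≤ Real.log y := Real.log_nonneg hy
  have ha : 0 < p / 2 := by linarith
  have h := aux_rpow_le_exp ha (show 0 ≤ Real.log y / s by positivity)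
  have hexp : Real.exp (Real.log y / s) = y ^ (1 / s) := by
    rw [Real.rpow_def_of_pos hy0]
    ring_nf
  rw [hexp] at h
  have h2 : (Real.log y) ^ (p / 2) = s ^ (p / 2) * (Real.log y / s) ^ (p / 2) := by
    rw [← Real.mul_rpow hs0.le (by positivity)]
    congr 1
    field_simp
  rw [h2]
  calc s ^ (p/2) * (Real.log y / s) ^ (p/2)
      ≤ s ^ (p/2) * ((p/2 / Real.exp 1) ^ (p/2) * y ^ (1/s)) :=
        mul_le_mul_of_nonneg_left h (Real.rpow_nonneg hs0.le _)
    _ = (p * s / (2 * Real.exp 1)) ^ (p/2) * y ^ (1/s) := by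
        rw [← mul_assoc, ← Real.mul_rpow hs0.le (by positivity)]
        congr 2
        field_simp

lemma aux_bernoulli {s y : ℝ} (hs : 1 ≤ s) (hy : 1 ≤ y) :
    y ^ (1 / s) ≤ 1 + y / s := by
  have hs0 : 0 < s := lt_of_lt_of_le one_pos hs
  have hy0 : (0:ℝ) ≤ y := by linarith
  have h := Real.geom_mean_le_arith_mean2_weighted
    (show (0:ℝ) ≤ 1 - 1/s by rw [sub_nonneg]; exact div_le_one_of_le₀ hs hs0.le)
    (show (0:ℝ) ≤ 1/s by positivity) zero_le_one hy0 (by ring)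
  rw [Real.one_rpow, one_mul, mul_one] at h
  have h2 : 1/s * y = y / s := by ring
  rw [h2] at h
  have h3 : (0:ℝ) ≤ 1/s := by positivity
  linarith

/-- **`L^p` norm of `√(log Y)`.**
If `Y ≥ 1` almost surely and `p ≥ 1`, then
`(E[(log Y)^(p/2)])^(1/p) ≤ 5^(1/p) (p/(2e))^(1/2) · max(1, √(E[Y])/2)`. -/
theorem lp_sqrt_log_le {Ω : Type*} [MeasurableSpace Ω] (μ : Measure Ω)
    [IsProbabilityMeasure μ] (Y : Ω → ℝ) (hY : Measurable Y)
    (hone : ∀ᵐ ω ∂μ, 1 ≤ Y ω) (hint : Integrable Y μ)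
    (p : ℝ) (hp : 1 ≤ p) :
    (∫ ω, (Real.log (Y ω)) ^ (p / 2) ∂μ) ^ (1 / p)
      ≤ (5 : ℝ) ^ (1 / p) * (p / (2 * Real.exp 1)) ^ ((1:ℝ) / 2)
          * max 1 (Real.sqrt (∫ ω, Y ω ∂μ) / 2) := by
  set I : ℝ := ∫ ω, Y ω ∂μ with hI
  set m : ℝ := max 1 (Real.sqrt I / 2) with hmdef
  have hm1 : (1:ℝ) ≤ m := le_max_left _ _
  have hm0 : (0:ℝ) ≤ m := by linarith
  set s : ℝ := m ^ 2 with hsdef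
  have hs1 : (1:ℝ) ≤ s := by nlinarith
  have hs0 : (0:ℝ) < s := by linarith
  have hp0 : (0:ℝ) < p := by linarith
  have hI0 : 0 ≤ I :=
    integral_nonneg_of_ae (hone.mono fun ω h => le_trans zero_le_one h)
  have hIs : I ≤ 4 * s := by
    have h1 : Real.sqrt I / 2 ≤ m := le_max_right _ _
    have h2 : (Real.sqrt I / 2) ^ 2 ≤ m ^ 2 := pow_le_pow_left₀ (by positivity) h1 2
    have h3 : Real.sqrt I ^ 2 = I := Real.sq_sqrt hI0
    nlinarith
  set C : ℝ := (p * s / (2 * Real.exp 1)) ^ (p / 2) with hCdef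
  have hC0 : 0 ≤ C := Real.rpow_nonneg (by positivity) _
  -- a.e. pointwise bound
  have hae : ∀ᵐ ω ∂μ, (Real.log (Y ω)) ^ (p / 2) ≤ C * (1 + Y ω / s) := by
    filter_upwards [hone] with ω hω
    calc (Real.log (Y ω)) ^ (p / 2)
        ≤ C * Y ω ^ (1 / s) := aux_key_pointwise hs1 hp hω
      _ ≤ C * (1 + Y ω / s) :=
          mul_le_mul_of_nonneg_left (aux_bernoulli hs1 hω) hC0
  have haenn : ∀ᵐ ω ∂μ, 0 ≤ (Real.log (Y ω)) ^ (p / 2) := by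
    filter_upwards [hone] with ω hω
    exact Real.rpow_nonneg (Real.log_nonneg hω) _
  -- integrability
  have hg : Integrable (fun ω => C * (1 + Y ω / s)) μ :=
    ((integrable_const (1:ℝ)).add (hint.div_const s)).const_mul C
  have hf : Integrable (fun ω => (Real.log (Y ω)) ^ (p / 2)) μ := by
    refine Integrable.mono' hg ?_ ?_
    · exact (hY.log.pow_const _).aestronglyMeasurable
    · filter_upwards [hae, haenn] with ω h1 h2
      rwa [Real.norm_of_nonneg h2]
  -- integral bound
  have hint5 : (∫ ω, (Real.log (Y ω)) ^ (p / 2) ∂μ) ≤ 5 * C := by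
    calc (∫ ω, (Real.log (Y ω)) ^ (p / 2) ∂μ)
        ≤ ∫ ω, C * (1 + Y ω / s) ∂μ := integral_mono_ae hf hg hae
      _ = C * (1 + I / s) := by
          rw [integral_const_mul, integral_add (integrable_const 1) (hint.div_const s),
            integral_const, integral_div]
          simp [hI]
      _ ≤ C * 5 := by
          have : I / s ≤ 4 := (div_le_iff₀ hs0).mpr (by linarith)
          nlinarith
      _ = 5 * C := by ring
  have h0 : 0 ≤ ∫ ω, (Real.log (Y ω)) ^ (p / 2) ∂μ := integral_nonneg_of_ae haenn
  have hsm : s ^ ((1:ℝ)/2) = m := by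
    rw [hsdef, ← Real.rpow_natCast m 2, ← Real.rpow_mul hm0]
    norm_num
  have hCp : C ^ (1/p) = (p / (2 * Real.exp 1)) ^ ((1:ℝ)/2) * m := by
    rw [hCdef, ← Real.rpow_mul (div_nonneg (by nlinarith) (by positivity)),
      show p/2 * (1/p) = (1:ℝ)/2 by field_simp,
      show p * s / (2 * Real.exp 1) = (p / (2 * Real.exp 1)) * s by ring,
      Real.mul_rpow (div_nonneg hp0.le (by positivity)) hs0.le, hsm]
  calc (∫ ω, (Real.log (Y ω)) ^ (p / 2) ∂μ) ^ (1 / p)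
      ≤ (5 * C) ^ (1 / p) := Real.rpow_le_rpow h0 hint5 (by positivity)
    _ = 5 ^ (1 / p) * C ^ (1 / p) := Real.mul_rpow (by norm_num) hC0
    _ = 5 ^ (1 / p) * ((p / (2 * Real.exp 1)) ^ ((1:ℝ) / 2) * m) := by
        rw [hCp]
    _ = 5 ^ (1 / p) * (p / (2 * Real.exp 1)) ^ ((1:ℝ) / 2) * m := by ring
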